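/- arXiv:2310.12047 — 3 statements merged into one kernel-verified Lean document; each statement's English description precedes it below -/
import Mathlib

section
/- For every integer n ≥ 3, k(S_n) = α(n) + 2β(n) and k(A_n) = 2α(n) + β(n), where α(n) is the number of conjugacy classes of even permutations in S_n that split into two conjugacy classes in A_n, and β(n) is the number of conjugacy classes of even permutations in S_n that remain a single conjugacy class in A_n. -/
/-- An `Sₙ`-conjugacy class consists of even permutations. -/
def IsEvenClass (n : ℕ) (c : ConjClasses (Equiv.Perm (Fin n))) : Prop :=
  ∀ x ∈ c.carrier, x ∈ alternatingGroup (Fin n)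

/-- An `Sₙ`-conjugacy class of even permutations splits into two `Aₙ`-classes. -/
def SplitsInAlt (n : ℕ) (c : ConjClasses (Equiv.Perm (Fin n))) : Prop :=
  ∃ σ τ : alternatingGroup (Fin n),
    ConjClasses.mk (σ : Equiv.Perm (Fin n)) = c ∧
    ConjClasses.mk (τ : Equiv.Perm (Fin n)) = c ∧ ¬ IsConj σ τ

/-- The number of even `Sₙ`-classes splitting in `Aₙ`. -/
noncomputable def alphaFn (n : ℕ) : ℕ :=
  Nat.card {c : ConjClasses (Equiv.Perm (Fin n)) // IsEvenClass n c ∧ SplitsInAlt n c}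

/-- The number of even `Sₙ`-classes not splitting in `Aₙ`. -/
noncomputable def betaFn (n : ℕ) : ℕ :=
  Nat.card {c : ConjClasses (Equiv.Perm (Fin n)) // IsEvenClass n c ∧ ¬ SplitsInAlt n c}

open Equiv Equiv.Perm Finset MulAction
open scoped Classical

variable {n : ℕ}

local notation "G" => Equiv.Perm (Fin n)

lemma sign_conj_eq (g x : G) : Perm.sign (g * x * g⁻¹) = Perm.sign x := by
  rw [map_mul, map_mul, map_inv, mul_comm (Perm.sign g) (Perm.sign x), mul_inv_cancel_right]

lemma sign_eq_of_isConj {x y : G} (h : IsConj x y) : Perm.sign x = Perm.sign y := by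
  obtain ⟨c, hc⟩ := h
  have : (c : G) * x * (c : G)⁻¹ = y := by
    rw [hc.eq]; group
  rw [← this, sign_conj_eq]

lemma sign_dichotomy (x : G) : Perm.sign x = 1 ∨ Perm.sign x = -1 :=
  Int.units_eq_one_or _

lemma isEvenClass_mk_iff {x : G} :
    IsEvenClass n (ConjClasses.mk x) ↔ Perm.sign x = 1 := by
  constructor
  · intro h
    have hx : x ∈ (ConjClasses.mk x).carrier := ConjClasses.mem_carrier_iff_mk_eq.2 rfl
    exact Equiv.Perm.mem_alternatingGroup.1 (h x hx)
  · intro h y hy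
    have := ConjClasses.mem_carrier_iff_mk_eq.1 hy
    have hc : IsConj x y := ConjClasses.mk_eq_mk_iff_isConj.1 this.symm
    rw [Equiv.Perm.mem_alternatingGroup, ← sign_eq_of_isConj hc, h]

def aswap (n : ℕ) (hn : 3 ≤ n) : Equiv.Perm (Fin n) :=
  Equiv.swap ⟨0, by omega⟩ ⟨1, by omega⟩

lemma sign_aswap (n : ℕ) (hn : 3 ≤ n) : Perm.sign (aswap n hn) = -1 :=
  Equiv.Perm.sign_swap (by simp [Fin.ext_iff])

def sigma0 {x : G} (hx : Perm.sign x = 1) : alternatingGroup (Fin n) :=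
  ⟨x, Equiv.Perm.mem_alternatingGroup.2 hx⟩

def tau0 (hn : 3 ≤ n) {x : G} (hx : Perm.sign x = 1) : alternatingGroup (Fin n) :=
  ⟨aswap n hn * x * (aswap n hn)⁻¹,
    Equiv.Perm.mem_alternatingGroup.2 (by rw [sign_conj_eq]; exact hx)⟩

/-- conjugacy in the alternating group from an even conjugator downstairs -/
lemma isConj_alt {σ τ : alternatingGroup (Fin n)} (u : G) (hu : Perm.sign u = 1)
    (h : u * (σ : G) * u⁻¹ = τ) : IsConj σ τ := by
  refine isConj_iff.2 ⟨⟨u, Equiv.Perm.mem_alternatingGroup.2 hu⟩, ?_⟩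
  apply Subtype.ext
  simpa using h

lemma isConj_of_isConjG {σ τ : alternatingGroup (Fin n)}
    (h : IsConj (σ : G) (τ : G))
    (hy : ∃ y : G, Perm.sign y = -1 ∧ y * (σ : G) = (σ : G) * y) : IsConj σ τ := by
  obtain ⟨g, hg⟩ := isConj_iff.1 h
  obtain ⟨y, hy1, hy2⟩ := hy
  have hyc : y * (σ : G) * y⁻¹ = σ := by rw [hy2]; group
  rcases sign_dichotomy g with h1 | h1
  · exact isConj_alt g h1 hg
  · refine isConj_alt (g * y) (by rw [map_mul, h1, hy1]; norm_num) ?_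
    calc (g * y) * (σ : G) * (g * y)⁻¹ = g * (y * (σ : G) * y⁻¹) * g⁻¹ := by group
      _ = g * (σ : G) * g⁻¹ := by rw [hyc]
      _ = τ := hg

lemma mk_tau0_eq (hn : 3 ≤ n) {x : G} (hx : Perm.sign x = 1) :
    ConjClasses.mk ((tau0 hn hx : G)) = ConjClasses.mk x :=
  ConjClasses.mk_eq_mk_iff_isConj.2 (isConj_iff.2 ⟨aswap n hn, rfl⟩).symm

/-- the two candidate `Aₙ`-classes inside an even `Sₙ`-class -/
lemma fiber_eq (hn : 3 ≤ n) {x : G} (hx : Perm.sign x = 1)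
    (d : ConjClasses (alternatingGroup (Fin n))) :
    ConjClasses.map (alternatingGroup (Fin n)).subtype d = ConjClasses.mk x ↔
      d = ConjClasses.mk (sigma0 hx) ∨ d = ConjClasses.mk (tau0 hn hx) := by
  obtain ⟨ρ, rfl⟩ := ConjClasses.exists_rep d
  constructor
  · intro h
    have h' : IsConj x (ρ : G) := by
      have : ConjClasses.mk ((ρ : G)) = ConjClasses.mk x := h
      exact (ConjClasses.mk_eq_mk_iff_isConj.1 this).symm
    obtain ⟨g, hg⟩ := isConj_iff.1 h'
    rcases sign_dichotomy g with h1 | h1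
    · left
      exact (ConjClasses.mk_eq_mk_iff_isConj.2 (isConj_alt g h1 hg)).symm
    · right
      refine (ConjClasses.mk_eq_mk_iff_isConj.2
        (isConj_alt (g * (aswap n hn)⁻¹) ?_ ?_)).symm
      · rw [map_mul, h1, map_inv, sign_aswap]; norm_num
      · show g * (aswap n hn)⁻¹ * (aswap n hn * x * (aswap n hn)⁻¹) *
            (g * (aswap n hn)⁻¹)⁻¹ = ρ
        rw [mul_inv_rev, inv_inv, ← hg]
        group
  · rintro (h | h) <;> rw [h]
    · exact congrArg _ rfl
    · show ConjClasses.mk ((tau0 hn hx : G)) = ConjClasses.mk x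
      exact mk_tau0_eq hn hx

lemma map_mk_eq {σ : alternatingGroup (Fin n)} :
    ConjClasses.map (alternatingGroup (Fin n)).subtype (ConjClasses.mk σ)
      = ConjClasses.mk (σ : G) := rfl

lemma splits_iff_ne (hn : 3 ≤ n) {x : G} (hx : Perm.sign x = 1) :
    SplitsInAlt n (ConjClasses.mk x) ↔
      ConjClasses.mk (sigma0 hx) ≠ ConjClasses.mk (tau0 hn hx) := by
  constructor
  · rintro ⟨σ, τ, h1, h2, hne⟩ heq
    have hσ := (fiber_eq hn hx (ConjClasses.mk σ)).1 h1
    have hτ := (fiber_eq hn hx (ConjClasses.mk τ)).1 h2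
    apply hne
    apply ConjClasses.mk_eq_mk_iff_isConj.1
    rcases hσ with h | h <;> rcases hτ with h' | h' <;>
      simp [h, h', heq]
  · intro hne
    exact ⟨sigma0 hx, tau0 hn hx, rfl, mk_tau0_eq hn hx,
      fun hc => hne (ConjClasses.mk_eq_mk_iff_isConj.2 hc)⟩

lemma mk_sigma0_eq_tau0_iff (hn : 3 ≤ n) {x : G} (hx : Perm.sign x = 1) :
    ConjClasses.mk (sigma0 hx) = ConjClasses.mk (tau0 hn hx) ↔
      ∃ y : G, Perm.sign y = -1 ∧ y * x = x * y := by
  constructor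
  · intro h
    obtain ⟨u, hu⟩ := isConj_iff.1 (ConjClasses.mk_eq_mk_iff_isConj.1 h)
    have hu' : (u : G) * x * (u : G)⁻¹ = aswap n hn * x * (aswap n hn)⁻¹ := by
      have := congrArg (Subtype.val) hu
      simpa [sigma0, tau0] using this
    refine ⟨(aswap n hn)⁻¹ * (u : G), ?_, ?_⟩
    · rw [map_mul, map_inv, sign_aswap]
      have : Perm.sign (u : G) = 1 :=
        Equiv.Perm.mem_alternatingGroup.1 u.2
      rw [this]; norm_num
    · have := congrArg (fun z => (aswap n hn)⁻¹ * z * u.val⁻¹⁻¹) hu'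
      calc (aswap n hn)⁻¹ * (u:G) * x
          = ((aswap n hn)⁻¹ * ((u:G) * x * (u:G)⁻¹) * (u:G)) := by group
        _ = (aswap n hn)⁻¹ * (aswap n hn * x * (aswap n hn)⁻¹) * (u:G) := by rw [hu']
        _ = x * ((aswap n hn)⁻¹ * (u:G)) := by group
  · rintro ⟨y, hy1, hy2⟩
    apply ConjClasses.mk_eq_mk_iff_isConj.2
    have hyc : y * x * y⁻¹ = x := by rw [hy2]; group
    refine isConj_alt (aswap n hn * y⁻¹) ?_ ?_
    · rw [map_mul, map_inv, sign_aswap, hy1]; norm_num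
    · show aswap n hn * y⁻¹ * x * (aswap n hn * y⁻¹)⁻¹ = (tau0 hn hx : G)
      show aswap n hn * y⁻¹ * x * (aswap n hn * y⁻¹)⁻¹
          = aswap n hn * x * (aswap n hn)⁻¹
      have hyc' : y⁻¹ * x * y = x := by
        calc y⁻¹ * x * y = y⁻¹ * (x * y) := by group
          _ = y⁻¹ * (y * x) := by rw [hy2]
          _ = x := by group
      rw [mul_inv_rev, inv_inv]
      calc aswap n hn * y⁻¹ * x * (y * (aswap n hn)⁻¹)
          = aswap n hn * (y⁻¹ * x * y) * (aswap n hn)⁻¹ := by group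
        _ = aswap n hn * x * (aswap n hn)⁻¹ := by rw [hyc']

lemma nonsplit_iff (hn : 3 ≤ n) {x : G} (hx : Perm.sign x = 1) :
    ¬ SplitsInAlt n (ConjClasses.mk x) ↔
      ∃ y : G, Perm.sign y = -1 ∧ y * x = x * y := by
  rw [splits_iff_ne hn hx, not_not, mk_sigma0_eq_tau0_iff hn hx]

/-- orbit-stabilizer for conjugation, Finset form -/
lemma OS (y : G) :
    (univ.filter fun z => ConjClasses.mk z = ConjClasses.mk y).card *
      (univ.filter fun z => z * y = y * z).card = Fintype.card G := by
  classical
  have h := MulAction.card_orbit_mul_card_stabilizer_eq_card_group (ConjAct G) y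
  rw [ConjAct.card] at h
  have horb : Fintype.card (orbit (ConjAct G) y) =
      (univ.filter fun z => ConjClasses.mk z = ConjClasses.mk y).card := by
    rw [← Fintype.card_subtype]
    exact Fintype.card_congr (Equiv.subtypeEquivRight (fun z => by
      rw [ConjAct.orbit_eq_carrier_conjClasses, ConjClasses.mem_carrier_iff_mk_eq]))
  have hstab : Fintype.card (stabilizer (ConjAct G) y) =
      (univ.filter fun z => z * y = y * z).card := by
    rw [← Fintype.card_subtype]
    refine Fintype.card_congr (Equiv.subtypeEquiv (ConjAct.ofConjAct : ConjAct (Equiv.Perm (Fin n)) ≃* Equiv.Perm (Fin n)).toEquiv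
      (fun g => ?_))
    rw [MulAction.mem_stabilizer_iff, ConjAct.smul_def, mul_inv_eq_iff_eq_mul]
    exact Iff.rfl
  rw [← horb, ← hstab, h]

lemma cen_card_conj {y z : G} (h : ConjClasses.mk z = ConjClasses.mk y) :
    (univ.filter fun w => w * z = z * w).card =
      (univ.filter fun w => w * y = y * w).card := by
  classical
  have h1 := OS (n := n) y
  have h2 := OS (n := n) z
  have hfib : (univ.filter fun w => ConjClasses.mk w = ConjClasses.mk z) =
      (univ.filter fun w => ConjClasses.mk w = ConjClasses.mk y) := by
    simp_rw [h]
  rw [hfib] at h2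
  have hpos : 0 < (univ.filter fun w => ConjClasses.mk w = ConjClasses.mk y).card := by
    refine Finset.card_pos.2 ⟨y, ?_⟩
    simp
  exact Nat.eq_of_mul_eq_mul_left hpos (h2.trans h1.symm)

/-- summed orbit-stabilizer over a full conjugacy-class fiber -/
lemma sum_cen_card (y : G) :
    ∑ z ∈ univ.filter (fun z => ConjClasses.mk z = ConjClasses.mk y),
      (univ.filter fun w => w * z = z * w).card = Fintype.card G := by
  classical
  rw [Finset.sum_congr rfl (fun z hz => cen_card_conj (Finset.mem_filter.1 hz).2),
    Finset.sum_const, smul_eq_mul, OS]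

/-- in the centralizer of any element, an odd commuting element gives a parity bijection -/
lemma parity_bij {x y₀ : G} (hy₀ : Perm.sign y₀ = -1) (hc : y₀ * x = x * y₀) :
    (univ.filter fun z => Perm.sign z = 1 ∧ z * x = x * z).card =
      (univ.filter fun z => Perm.sign z = -1 ∧ z * x = x * z).card := by
  classical
  refine Finset.card_bij' (fun z _ => z * y₀) (fun z _ => z * y₀⁻¹) ?_ ?_ ?_ ?_
  · intro z hz
    obtain ⟨hz1, hz2⟩ := Finset.mem_filter.1 hz |>.2 |> fun h => (Finset.mem_filter.1 hz).2
    simp only [Finset.mem_filter, Finset.mem_univ, true_and] at hz ⊢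
    obtain ⟨h1, h2⟩ := hz
    constructor
    · rw [map_mul, h1, hy₀]; norm_num
    · calc z * y₀ * x = z * (y₀ * x) := by group
        _ = z * (x * y₀) := by rw [hc]
        _ = (z * x) * y₀ := by group
        _ = (x * z) * y₀ := by rw [h2]
        _ = x * (z * y₀) := by group
  · intro z hz
    simp only [Finset.mem_filter, Finset.mem_univ, true_and] at hz ⊢
    obtain ⟨h1, h2⟩ := hz
    have hc' : y₀⁻¹ * x = x * y₀⁻¹ := by
      calc y₀⁻¹ * x = y₀⁻¹ * (y₀ * x * y₀⁻¹) := by rw [hc]; group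
        _ = x * y₀⁻¹ := by group
    constructor
    · rw [map_mul, h1, map_inv, hy₀]; norm_num
    · calc z * y₀⁻¹ * x = z * (y₀⁻¹ * x) := by group
        _ = z * (x * y₀⁻¹) := by rw [hc']
        _ = (z * x) * y₀⁻¹ := by group
        _ = (x * z) * y₀⁻¹ := by rw [h2]
        _ = x * (z * y₀⁻¹) := by group
  · intro z _; group
  · intro z _; group

lemma not_sign_one {x : G} : ¬ Perm.sign x = 1 ↔ Perm.sign x = -1 := by
  rcases Int.units_eq_one_or (Perm.sign x) with h | h <;> simp [h]

/-- full centralizer card = twice the even part, when an odd commuter exists -/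
lemma cen_card_eq_two_mul {x y₀ : G} (hy₀ : Perm.sign y₀ = -1) (hc : y₀ * x = x * y₀) :
    (univ.filter fun z => z * x = x * z).card =
      2 * (univ.filter fun z => Perm.sign z = 1 ∧ z * x = x * z).card := by
  classical
  have hsplit := Finset.card_filter_add_card_filter_not
    (s := univ.filter fun z : G => z * x = x * z) (p := fun z => Perm.sign z = 1)
  rw [Finset.filter_filter, Finset.filter_filter] at hsplit
  have e1 : (univ.filter fun z : G => z * x = x * z ∧ Perm.sign z = 1) =
      (univ.filter fun z : G => Perm.sign z = 1 ∧ z * x = x * z) := by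
    simp_rw [and_comm]
  have e2 : (univ.filter fun z : G => z * x = x * z ∧ ¬ Perm.sign z = 1) =
      (univ.filter fun z : G => Perm.sign z = -1 ∧ z * x = x * z) := by
    simp_rw [not_sign_one, and_comm]
  rw [e1, e2] at hsplit
  rw [← hsplit, parity_bij hy₀ hc, two_mul]

lemma sum_swap_comm :
    ∑ y ∈ univ.filter (fun y : G => Perm.sign y = -1),
      (univ.filter fun x => Perm.sign x = 1 ∧ x * y = y * x).card =
    ∑ x ∈ univ.filter (fun x : G => Perm.sign x = 1),
      (univ.filter fun y => Perm.sign y = -1 ∧ y * x = x * y).card := by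
  classical
  have claim1 : ∀ y : G,
      (if Perm.sign y = -1
        then (univ.filter fun x : G => Perm.sign x = 1 ∧ x * y = y * x).card else 0) =
      ∑ x : G, if Perm.sign x = 1 ∧ Perm.sign y = -1 ∧ x * y = y * x then 1 else 0 := by
    intro y
    by_cases hy : Perm.sign y = -1
    · rw [if_pos hy, Finset.card_filter]
      exact Finset.sum_congr rfl (fun x _ => if_congr
        ⟨fun ⟨h1, h2⟩ => ⟨h1, hy, h2⟩, fun ⟨h1, _, h2⟩ => ⟨h1, h2⟩⟩ rfl rfl)
    · rw [if_neg hy]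
      symm
      exact Finset.sum_eq_zero (fun x _ => if_neg (fun ⟨_, h, _⟩ => hy h))
  have claim2 : ∀ x : G,
      (if Perm.sign x = 1
        then (univ.filter fun y : G => Perm.sign y = -1 ∧ y * x = x * y).card else 0) =
      ∑ y : G, if Perm.sign x = 1 ∧ Perm.sign y = -1 ∧ x * y = y * x then 1 else 0 := by
    intro x
    have hflip : (univ.filter fun y : G => Perm.sign y = -1 ∧ y * x = x * y) =
        (univ.filter fun y : G => Perm.sign y = -1 ∧ x * y = y * x) :=
      Finset.filter_congr (fun z _ => by
        constructor <;> rintro ⟨h1, h2⟩ <;> exact ⟨h1, h2.symm⟩)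
    by_cases hx : Perm.sign x = 1
    · rw [if_pos hx, hflip, Finset.card_filter]
      exact Finset.sum_congr rfl (fun y _ => if_congr
        ⟨fun ⟨h1, h2⟩ => ⟨hx, h1, h2⟩, fun ⟨_, h1, h2⟩ => ⟨h1, h2⟩⟩ rfl rfl)
    · rw [if_neg hx]
      symm
      exact Finset.sum_eq_zero (fun y _ => if_neg (fun ⟨h, _, _⟩ => hx h))
  rw [Finset.sum_filter, Finset.sum_filter]
  simp_rw [claim1, claim2]
  exact Finset.sum_comm

lemma claimA :
    (univ.filter fun c : ConjClasses G => ¬ IsEvenClass n c).card * Fintype.card G =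
    2 * ∑ y ∈ univ.filter (fun y : G => Perm.sign y = -1),
      (univ.filter fun x => Perm.sign x = 1 ∧ x * y = y * x).card := by
  classical
  rw [Finset.mul_sum]
  have step1 : ∀ y ∈ univ.filter (fun y : G => Perm.sign y = -1),
      2 * (univ.filter fun x => Perm.sign x = 1 ∧ x * y = y * x).card =
      (univ.filter fun z => z * y = y * z).card := by
    intro y hy
    have hy' : Perm.sign y = -1 := (Finset.mem_filter.1 hy).2
    exact (cen_card_eq_two_mul hy' rfl).symm
  rw [Finset.sum_congr rfl step1]
  have hmaps : ∀ y ∈ univ.filter (fun y : G => Perm.sign y = -1),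
      ConjClasses.mk y ∈ univ.filter (fun c : ConjClasses G => ¬ IsEvenClass n c) := by
    intro y hy
    have hy' := (Finset.mem_filter.1 hy).2
    simp only [Finset.mem_filter, Finset.mem_univ, true_and]
    rw [isEvenClass_mk_iff, hy']
    norm_num
  rw [← Finset.sum_fiberwise_of_maps_to hmaps (fun z => (univ.filter fun w => w * z = z * w).card)]
  have inner : ∀ c ∈ univ.filter (fun c : ConjClasses G => ¬ IsEvenClass n c),
      ∑ y ∈ (univ.filter fun y : G => Perm.sign y = -1).filter
          (fun y => ConjClasses.mk y = c),
        (univ.filter fun w => w * y = y * w).card = Fintype.card G := by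
    intro c hc
    obtain ⟨y₀, hy₀⟩ := ConjClasses.exists_rep c
    have hodd : ¬ IsEvenClass n c := (Finset.mem_filter.1 hc).2
    have hsy : Perm.sign y₀ = -1 := by
      rw [← not_sign_one]
      intro h
      exact hodd (by rw [← hy₀]; exact isEvenClass_mk_iff.2 h)
    have hset : (univ.filter fun y : G => Perm.sign y = -1).filter
        (fun y => ConjClasses.mk y = c) =
        univ.filter (fun z => ConjClasses.mk z = ConjClasses.mk y₀) := by
      rw [Finset.filter_filter]
      apply Finset.filter_congr
      intro z _
      constructor
      · rintro ⟨-, h2⟩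
        rw [h2, ← hy₀]
      · intro h
        refine ⟨?_, by rw [h, hy₀]⟩
        rw [sign_eq_of_isConj (ConjClasses.mk_eq_mk_iff_isConj.1 h), hsy]
    rw [hset]
    exact sum_cen_card y₀
  rw [Finset.sum_congr rfl inner, Finset.sum_const, smul_eq_mul]

lemma claimB (hn : 3 ≤ n) :
    (univ.filter fun c : ConjClasses G => IsEvenClass n c ∧ ¬ SplitsInAlt n c).card *
        Fintype.card G =
    2 * ∑ x ∈ univ.filter (fun x : G => Perm.sign x = 1),
      (univ.filter fun y => Perm.sign y = -1 ∧ y * x = x * y).card := by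
  classical
  have hsub : univ.filter (fun x : G => Perm.sign x = 1 ∧
      ¬ SplitsInAlt n (ConjClasses.mk x)) ⊆
      univ.filter (fun x : G => Perm.sign x = 1) := by
    intro x hx
    simp only [Finset.mem_filter, Finset.mem_univ, true_and] at hx ⊢
    exact hx.1
  have hzero : ∀ x ∈ univ.filter (fun x : G => Perm.sign x = 1),
      x ∉ univ.filter (fun x : G => Perm.sign x = 1 ∧
        ¬ SplitsInAlt n (ConjClasses.mk x)) →
      (univ.filter fun y => Perm.sign y = -1 ∧ y * x = x * y).card = 0 := by
    intro x hx hnx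
    simp only [Finset.mem_filter, Finset.mem_univ, true_and] at hx hnx
    have hsplit : SplitsInAlt n (ConjClasses.mk x) := by
      by_contra hns
      exact hnx ⟨hx, hns⟩
    rw [Finset.card_eq_zero, Finset.filter_eq_empty_iff]
    rintro z - ⟨h1, h2⟩
    exact (splits_iff_ne hn hx).1 hsplit ((mk_sigma0_eq_tau0_iff hn hx).2 ⟨z, h1, h2⟩)
  rw [← Finset.sum_subset hsub hzero, Finset.mul_sum]
  have step1 : ∀ x ∈ univ.filter (fun x : G => Perm.sign x = 1 ∧
      ¬ SplitsInAlt n (ConjClasses.mk x)),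
      2 * (univ.filter fun y => Perm.sign y = -1 ∧ y * x = x * y).card =
      (univ.filter fun z => z * x = x * z).card := by
    intro x hx
    simp only [Finset.mem_filter, Finset.mem_univ, true_and] at hx
    obtain ⟨y₀, h1, h2⟩ := (nonsplit_iff hn hx.1).1 hx.2
    rw [← parity_bij h1 h2]
    exact (cen_card_eq_two_mul h1 h2).symm
  rw [Finset.sum_congr rfl step1]
  have hmaps : ∀ x ∈ univ.filter (fun x : G => Perm.sign x = 1 ∧
      ¬ SplitsInAlt n (ConjClasses.mk x)),
      ConjClasses.mk x ∈ univ.filter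
        (fun c : ConjClasses G => IsEvenClass n c ∧ ¬ SplitsInAlt n c) := by
    intro x hx
    simp only [Finset.mem_filter, Finset.mem_univ, true_and] at hx ⊢
    exact ⟨isEvenClass_mk_iff.2 hx.1, hx.2⟩
  rw [← Finset.sum_fiberwise_of_maps_to hmaps
    (fun z => (univ.filter fun w => w * z = z * w).card)]
  have inner : ∀ c ∈ univ.filter
      (fun c : ConjClasses G => IsEvenClass n c ∧ ¬ SplitsInAlt n c),
      ∑ x ∈ (univ.filter fun x : G => Perm.sign x = 1 ∧
          ¬ SplitsInAlt n (ConjClasses.mk x)).filter (fun x => ConjClasses.mk x = c),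
        (univ.filter fun w => w * x = x * w).card = Fintype.card G := by
    intro c hc
    simp only [Finset.mem_filter, Finset.mem_univ, true_and] at hc
    obtain ⟨x₀, hx₀⟩ := ConjClasses.exists_rep c
    have hsx : Perm.sign x₀ = 1 := by
      rw [← hx₀] at hc
      exact isEvenClass_mk_iff.1 hc.1
    have hset : (univ.filter fun x : G => Perm.sign x = 1 ∧
        ¬ SplitsInAlt n (ConjClasses.mk x)).filter (fun x => ConjClasses.mk x = c) =
        univ.filter (fun z => ConjClasses.mk z = ConjClasses.mk x₀) := by
      rw [Finset.filter_filter]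
      apply Finset.filter_congr
      intro z _
      constructor
      · rintro ⟨-, h2⟩
        rw [h2, ← hx₀]
      · intro h
        have hz : ConjClasses.mk z = c := by rw [h, hx₀]
        refine ⟨⟨?_, ?_⟩, hz⟩
        · rw [sign_eq_of_isConj (ConjClasses.mk_eq_mk_iff_isConj.1 h), hsx]
        · rw [hz]; exact hc.2
    rw [hset]
    exact sum_cen_card x₀
  rw [Finset.sum_congr rfl inner, Finset.sum_const, smul_eq_mul]

lemma m_eq_beta (hn : 3 ≤ n) :
    (univ.filter fun c : ConjClasses G => ¬ IsEvenClass n c).card =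
    (univ.filter fun c : ConjClasses G => IsEvenClass n c ∧ ¬ SplitsInAlt n c).card := by
  classical
  have hA := claimA (n := n)
  have hB := claimB hn
  rw [sum_swap_comm] at hA
  exact Nat.eq_of_mul_eq_mul_right Fintype.card_pos (hA.trans hB.symm)

lemma kG_count (hn : 3 ≤ n) :
    Nat.card (ConjClasses G) =
      (univ.filter fun c : ConjClasses G => IsEvenClass n c ∧ SplitsInAlt n c).card +
      2 * (univ.filter fun c : ConjClasses G => IsEvenClass n c ∧ ¬ SplitsInAlt n c).card := by
  classical
  rw [Nat.card_eq_fintype_card, ← Finset.card_univ]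
  rw [← Finset.card_filter_add_card_filter_not
    (s := (univ : Finset (ConjClasses G))) (p := fun c => IsEvenClass n c)]
  rw [← Finset.card_filter_add_card_filter_not
    (s := univ.filter (fun c : ConjClasses G => IsEvenClass n c))
    (p := fun c => SplitsInAlt n c)]
  rw [Finset.filter_filter, Finset.filter_filter, m_eq_beta hn]
  ring

lemma map_mk_eq' {σ : alternatingGroup (Fin n)} :
    ConjClasses.map (alternatingGroup (Fin n)).subtype (ConjClasses.mk σ)
      = ConjClasses.mk (σ : G) := rfl

lemma kN_count (hn : 3 ≤ n) :
    Nat.card (ConjClasses (alternatingGroup (Fin n))) =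
      2 * (univ.filter fun c : ConjClasses G => IsEvenClass n c ∧ SplitsInAlt n c).card +
      (univ.filter fun c : ConjClasses G => IsEvenClass n c ∧ ¬ SplitsInAlt n c).card := by
  classical
  rw [Nat.card_eq_fintype_card, ← Finset.card_univ]
  have hmaps : ∀ d : ConjClasses (alternatingGroup (Fin n)), d ∈ univ →
      ConjClasses.map (alternatingGroup (Fin n)).subtype d ∈
        univ.filter (fun c : ConjClasses G => IsEvenClass n c) := by
    intro d _
    obtain ⟨σ, rfl⟩ := ConjClasses.exists_rep d
    simp only [Finset.mem_filter, Finset.mem_univ, true_and]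
    rw [map_mk_eq']
    exact isEvenClass_mk_iff.2 (Equiv.Perm.mem_alternatingGroup.1 σ.2)
  rw [Finset.card_eq_sum_card_fiberwise hmaps]
  have hfib : ∀ c ∈ univ.filter (fun c : ConjClasses G => IsEvenClass n c),
      (univ.filter fun d => ConjClasses.map (alternatingGroup (Fin n)).subtype d = c).card
        = if SplitsInAlt n c then 2 else 1 := by
    intro c hc
    simp only [Finset.mem_filter, Finset.mem_univ, true_and] at hc
    obtain ⟨x₀, hx₀⟩ := ConjClasses.exists_rep c
    have hsx : Perm.sign x₀ = 1 := by
      rw [← hx₀] at hc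
      exact isEvenClass_mk_iff.1 hc
    subst hx₀
    have hset : (univ.filter fun d =>
        ConjClasses.map (alternatingGroup (Fin n)).subtype d = ConjClasses.mk x₀) =
        {ConjClasses.mk (sigma0 hsx), ConjClasses.mk (tau0 hn hsx)} := by
      ext d
      simp only [Finset.mem_filter, Finset.mem_univ, true_and, Finset.mem_insert,
        Finset.mem_singleton]
      exact fiber_eq hn hsx d
    rw [hset]
    by_cases hsplit : SplitsInAlt n (ConjClasses.mk x₀)
    · rw [if_pos hsplit]
      exact Finset.card_pair ((splits_iff_ne hn hsx).1 hsplit)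
    · rw [if_neg hsplit]
      have heq : ConjClasses.mk (sigma0 hsx) = ConjClasses.mk (tau0 hn hsx) :=
        not_not.1 (fun hne => hsplit ((splits_iff_ne hn hsx).2 hne))
      rw [← heq, Finset.pair_eq_singleton, Finset.card_singleton]
  rw [Finset.sum_congr rfl hfib, Finset.sum_ite, Finset.sum_const, Finset.sum_const,
    smul_eq_mul, smul_eq_mul, mul_one, Finset.filter_filter, Finset.filter_filter]
  ring


theorem k_symm_alt_alpha_beta (n : ℕ) (hn : 3 ≤ n) :
    Nat.card (ConjClasses (Equiv.Perm (Fin n))) = alphaFn n + 2 * betaFn n ∧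
    Nat.card (ConjClasses (alternatingGroup (Fin n))) = 2 * alphaFn n + betaFn n := by
  classical
  have hα : alphaFn n = (univ.filter fun c : ConjClasses (Equiv.Perm (Fin n)) =>
      IsEvenClass n c ∧ SplitsInAlt n c).card := by
    rw [alphaFn, Nat.card_eq_fintype_card, Fintype.card_subtype]
  have hβ : betaFn n = (univ.filter fun c : ConjClasses (Equiv.Perm (Fin n)) =>
      IsEvenClass n c ∧ ¬ SplitsInAlt n c).card := by
    rw [betaFn, Nat.card_eq_fintype_card, Fintype.card_subtype]
  exact ⟨by rw [hα, hβ]; exact kG_count hn, by rw [hα, hβ]; exact kN_count hn⟩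
end

section
/- For every integer n ≥ 12, k(S_n) > 2·(n−2)·log₂(n), where k(S_n) = p(n) is the number of conjugacy classes of S_n. -/
set_option maxRecDepth 40000
open List

def pgo : ℕ → ℕ → List ℕ
  | 0, _ => []
  | f+1, c => if c = 0 then [] else c % 100 :: pgo f (c / 100)

lemma pgo_inj : ∀ (f c₁ c₂ : ℕ), c₁ < 100 ^ f → c₂ < 100 ^ f →
    pgo f c₁ = pgo f c₂ → c₁ = c₂ := by
  intro f
  induction f with
  | zero => intro c₁ c₂ h1 h2 _; simp at h1 h2; omega
  | succ f ih =>
    intro c₁ c₂ h1 h2 h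
    by_cases e1 : c₁ = 0 <;> by_cases e2 : c₂ = 0
    · omega
    · simp [pgo, e1, e2] at h
    · simp [pgo, e1, e2] at h
    · simp only [pgo, if_neg e1, if_neg e2, List.cons.injEq] at h
      have d1 : c₁ / 100 < 100 ^ f := by
        rw [Nat.div_lt_iff_lt_mul (by norm_num)]; rw [pow_succ] at h1; omega
      have d2 : c₂ / 100 < 100 ^ f := by
        rw [Nat.div_lt_iff_lt_mul (by norm_num)]; rw [pow_succ] at h2; omega
      have := ih _ _ d1 d2 h.2
      omega

lemma conj_card_ge (n : ℕ) (s : Finset (Multiset ℕ))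
    (hs : ∀ m ∈ s, m.sum ≤ n ∧ ∀ a ∈ m, 2 ≤ a) :
    s.card ≤ Nat.card (ConjClasses (Equiv.Perm (Fin n))) := by
  have hex : ∀ m : {x // x ∈ s}, ∃ g : Equiv.Perm (Fin n), g.cycleType = (m : Multiset ℕ) := by
    rintro ⟨m, hm⟩
    rw [Equiv.Perm.exists_with_cycleType_iff]
    simpa using hs m hm
  choose g hg using hex
  have hinj : Function.Injective (fun m => ConjClasses.mk (g m)) := by
    intro a b hab
    have h1 : IsConj (g a) (g b) := ConjClasses.mk_eq_mk_iff_isConj.mp hab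
    have h2 := Equiv.Perm.isConj_iff_cycleType_eq.mp h1
    rw [hg a, hg b] at h2
    exact Subtype.ext h2
  have := Nat.card_le_card_of_injective _ hinj
  rwa [Nat.card_eq_finsetCard] at this

lemma conj_card_ge_codes (n m : ℕ) (L : List ℕ) (hmn : m ≤ n)
    (h1 : L.Chain' (· < ·))
    (h2 : ∀ c ∈ L, c < 100 ^ 30 ∧ (pgo 30 c).Chain' (· ≤ ·) ∧
        (pgo 30 c).sum ≤ m ∧ ∀ d ∈ pgo 30 c, 2 ≤ d) :
    L.length ≤ Nat.card (ConjClasses (Equiv.Perm (Fin n))) := by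
  set f : ℕ → Multiset ℕ := fun c => ((pgo 30 c : List ℕ) : Multiset ℕ) with hf
  have hnd : (L.map f).Nodup := by
    apply List.Nodup.map_on
    · intro x hx y hy hxy
      obtain ⟨bx, sx, _, _⟩ := h2 x hx
      obtain ⟨by', sy, _, _⟩ := h2 y hy
      have hperm : (pgo 30 x).Perm (pgo 30 y) := Multiset.coe_eq_coe.mp hxy
      have heq : pgo 30 x = pgo 30 y :=
        List.Perm.eq_of_pairwise' (List.isChain_iff_pairwise.mp sx)
          (List.isChain_iff_pairwise.mp sy) hperm
      exact pgo_inj 30 x y bx by' heq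
    · have hp := List.isChain_iff_pairwise.mp h1
      exact (hp.imp (fun h => Nat.ne_of_lt h))
  have hcard := conj_card_ge n (L.map f).toFinset ?_
  · rwa [List.toFinset_card_of_nodup hnd, List.length_map] at hcard
  · intro ms hms
    rw [List.mem_toFinset, List.mem_map] at hms
    obtain ⟨c, hc, rfl⟩ := hms
    obtain ⟨_, _, hsum, hmem⟩ := h2 c hc
    constructor
    · simpa [hf] using le_trans hsum hmn
    · intro a ha
      exact hmem a (by simpa [hf] using ha)

lemma icc_sum : ∀ k : ℕ, 2 ≤ k → 2 * (Finset.Icc 2 k).sum id + 2 = k * (k + 1) := by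
  intro k hk
  induction k with
  | zero => omega
  | succ k ih =>
    rcases Nat.lt_or_ge k 2 with h | h
    · interval_cases k <;> simp_all
    · rw [Finset.sum_Icc_succ_top (by omega)]
      have := ih h
      simp only [id] at *
      ring_nf
      ring_nf at this
      omega

lemma conj_card_ge_pow (n k : ℕ) (hk : 2 ≤ k) (hkn : k * (k + 1) ≤ 2 * n + 2) :
    2 ^ (k - 1) ≤ Nat.card (ConjClasses (Equiv.Perm (Fin n))) := by
  have hcard := conj_card_ge n ((Finset.Icc 2 k).powerset.image Finset.val) ?_
  · rwa [Finset.card_image_of_injective _ Finset.val_injective, Finset.card_powerset,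
      Nat.card_Icc] at hcard
  · intro ms hms
    rw [Finset.mem_image] at hms
    obtain ⟨S, hS, rfl⟩ := hms
    rw [Finset.mem_powerset] at hS
    constructor
    · have h1 : S.val.sum = S.sum id := by rw [Finset.sum, Multiset.map_id]
      have h2 : S.sum id ≤ (Finset.Icc 2 k).sum id :=
        Finset.sum_le_sum_of_subset hS
      have := icc_sum k hk
      omega
    · intro a ha
      have := hS (Finset.mem_def.mpr ha)
      rw [Finset.mem_Icc] at this
      exact this.1

def chLt : List ℕ → Bool
  | a :: b :: l => Nat.blt a b && chLt (b :: l)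
  | _ => true

def chLe : List ℕ → Bool
  | a :: b :: l => Nat.ble a b && chLe (b :: l)
  | _ => true

def okc (m c : ℕ) : Bool :=
  Nat.blt c (100 ^ 30) && chLe (pgo 30 c) && Nat.ble (pgo 30 c).sum m
    && (pgo 30 c).all (fun d => Nat.ble 2 d)

lemma chLt_sound : ∀ l : List ℕ, chLt l = true → l.Chain' (· < ·)
  | [] => by intro _; exact List.isChain_nil
  | [a] => by intro _; exact List.isChain_singleton _
  | a :: b :: l => by
    intro h
    simp only [chLt, Bool.and_eq_true, Nat.blt_eq] at h
    show List.IsChain _ (a :: b :: l); rw [List.isChain_cons_cons]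
    exact ⟨h.1, chLt_sound (b :: l) (by simpa using h.2)⟩

lemma chLe_sound : ∀ l : List ℕ, chLe l = true → l.Chain' (· ≤ ·)
  | [] => by intro _; exact List.isChain_nil
  | [a] => by intro _; exact List.isChain_singleton _
  | a :: b :: l => by
    intro h
    simp only [chLe, Bool.and_eq_true, Nat.ble_eq] at h
    show List.IsChain _ (a :: b :: l); rw [List.isChain_cons_cons]
    exact ⟨h.1, chLe_sound (b :: l) (by simpa using h.2)⟩

lemma okc_sound (m c : ℕ) (h : okc m c = true) :
    c < 100 ^ 30 ∧ (pgo 30 c).Chain' (· ≤ ·) ∧ (pgo 30 c).sum ≤ m ∧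
      ∀ d ∈ pgo 30 c, 2 ≤ d := by
  simp only [okc, Bool.and_eq_true, Nat.blt_eq, Nat.ble_eq, List.all_eq_true] at h
  refine ⟨h.1.1.1, chLe_sound _ h.1.1.2, h.1.2, fun d hd => by simpa using h.2 d hd⟩



lemma sq_le_two_pow : ∀ t : ℕ, 6 ≤ t → (t + 1) ^ 2 ≤ 2 ^ t := by
  intro t ht
  induction t with
  | zero => omega
  | succ t ih =>
    rcases Nat.lt_or_ge t 6 with h | h
    · interval_cases t <;> first | omega | norm_num
    · have := ih h
      have h2 : (t + 2) ^ 2 ≤ 2 * (t + 1) ^ 2 := by nlinarith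
      calc (t + 2) ^ 2 ≤ 2 * (t + 1) ^ 2 := h2
        _ ≤ 2 * 2 ^ t := by omega
        _ = 2 ^ (t + 1) := by ring

lemma cube_le_two_pow : ∀ s : ℕ, 12 ≤ s → (s + 3) ^ 2 * (s + 1) ≤ 2 ^ s := by
  intro s hs
  induction s with
  | zero => omega
  | succ s ih =>
    rcases Nat.lt_or_ge s 12 with h | h
    · interval_cases s <;> first | omega | norm_num
    · have := ih h
      have h2 : (s + 4) ^ 2 * (s + 2) ≤ 2 * ((s + 3) ^ 2 * (s + 1)) := by nlinarith
      calc (s + 4) ^ 2 * (s + 2) ≤ 2 * ((s + 3) ^ 2 * (s + 1)) := h2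
        _ ≤ 2 * 2 ^ s := by omega
        _ = 2 ^ (s + 1) := by ring

lemma range_bound (n M p q N : ℕ) (hn12 : 12 ≤ n) (hnM : n ≤ M) (hq : 0 < q)
    (hpow : M ^ q < 2 ^ p) (hnum : 2 * (M - 2) * p < N * q)
    (hN : N ≤ Nat.card (ConjClasses (Equiv.Perm (Fin n)))) :
    2 * ((n : ℝ) - 2) * Real.logb 2 n <
      (Nat.card (ConjClasses (Equiv.Perm (Fin n))) : ℝ) := by
  have hM12 : 12 ≤ M := le_trans hn12 hnM
  have hMpos : (0:ℝ) < M := by positivity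
  have hlogM : Real.logb 2 M < (p : ℝ) / q := by
    have h1 : (q : ℝ) * Real.logb 2 M = Real.logb 2 ((M : ℝ) ^ q) := by
      rw [Real.logb_pow]
    have h2 : Real.logb 2 ((M : ℝ) ^ q) < Real.logb 2 ((2 : ℝ) ^ p) := by
      apply Real.logb_lt_logb one_lt_two (by positivity)
      exact_mod_cast hpow
    have h3 : Real.logb 2 ((2 : ℝ) ^ p) = p := by
      rw [Real.logb_pow, Real.logb_self_eq_one (by norm_num), mul_one]
    rw [lt_div_iff₀ (by exact_mod_cast hq : (0:ℝ) < q)]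
    rw [mul_comm, h1]
    rw [h3] at h2
    exact h2
  have hlogn_nonneg : 0 ≤ Real.logb 2 n := by
    apply Real.logb_nonneg one_lt_two
    exact_mod_cast le_trans (by norm_num) hn12
  have hlogmono : Real.logb 2 n ≤ Real.logb 2 M := by
    apply Real.logb_le_logb_of_le one_lt_two (by positivity)
    exact_mod_cast hnM
  have step1 : 2 * ((n : ℝ) - 2) * Real.logb 2 n ≤ 2 * ((M : ℝ) - 2) * Real.logb 2 M := by
    apply mul_le_mul
    · have : (n:ℝ) ≤ M := by exact_mod_cast hnM
      linarith
    · exact hlogmono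
    · exact hlogn_nonneg
    · have : (12:ℝ) ≤ M := by exact_mod_cast hM12
      linarith
  have hMfact : (0:ℝ) < 2 * ((M : ℝ) - 2) := by
    have : (12:ℝ) ≤ M := by exact_mod_cast hM12
    linarith
  have step2 : 2 * ((M : ℝ) - 2) * Real.logb 2 M < 2 * ((M : ℝ) - 2) * ((p:ℝ)/q) :=
    mul_lt_mul_of_pos_left hlogM hMfact
  have step3 : 2 * ((M : ℝ) - 2) * ((p:ℝ)/q) < N := by
    have hcast : ((2 * (M - 2) * p : ℕ) : ℝ) < ((N * q : ℕ) : ℝ) := by exact_mod_cast hnum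
    push_cast [Nat.cast_sub (by omega : 2 ≤ M)] at hcast
    rw [mul_div_assoc'] at *
    rw [div_lt_iff₀ (by exact_mod_cast hq : (0:ℝ) < q)]
    linarith
  have step4 : (N : ℝ) ≤ (Nat.card (ConjClasses (Equiv.Perm (Fin n))) : ℝ) := by
    exact_mod_cast hN
  linarith

lemma asymp_bound (n : ℕ) (hn : 98 ≤ n)
    (hpow : ∀ k, 2 ≤ k → k * (k + 1) ≤ 2 * n + 2 →
      2 ^ (k - 1) ≤ Nat.card (ConjClasses (Equiv.Perm (Fin n)))) :
    2 * ((n : ℝ) - 2) * Real.logb 2 n <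
      (Nat.card (ConjClasses (Equiv.Perm (Fin n))) : ℝ) := by
  set t := Nat.sqrt (2 * n) with htdef
  have ht14 : 14 ≤ t := by
    rw [htdef]
    rw [Nat.le_sqrt]
    omega
  have htsq : t * t ≤ 2 * n := by have h := Nat.sqrt_le' (2 * n); rwa [pow_two] at h
  have hlt : 2 * n < (t + 1) * (t + 1) := by
    have h := Nat.lt_succ_sqrt' (2 * n); rwa [pow_two] at h
  have hcard := hpow (t - 1) (by omega) (by nlinarith [Nat.sub_add_cancel (by omega : 1 ≤ t)])
  have hk1 : t - 1 - 1 = t - 2 := by omega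
  rw [hk1] at hcard
  -- n < 2^(t-1)
  have hn2pow : n < 2 ^ (t - 1) := by
    have h1 : (t + 1) ^ 2 ≤ 2 ^ t := sq_le_two_pow t (by omega)
    have h2 : 2 ^ t = 2 * 2 ^ (t - 1) := by
      rw [← pow_succ']
      congr 1
      omega
    nlinarith [sq_nonneg (t+1)]
  -- nat inequality: 2 * n * (t - 1) < 2 ^ (t - 2)
  have hnat : 2 * n * (t - 1) < 2 ^ (t - 2) := by
    have h3 : (t + 1) ^ 2 * (t - 1) ≤ 2 ^ (t - 2) := by
      have := cube_le_two_pow (t - 2) (by omega)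
      have e1 : t - 2 + 3 = t + 1 := by omega
      have e2 : t - 2 + 1 = t - 1 := by omega
      rwa [e1, e2] at this
    have h4 : 2 * n * (t - 1) < (t + 1) ^ 2 * (t - 1) := by
      have : 2 * n < (t + 1) ^ 2 := by nlinarith
      have ht1 : 0 < t - 1 := by omega
      exact Nat.mul_lt_mul_of_lt_of_le this (le_refl _) ht1 |>.trans_le (le_refl _)
    omega
  -- real chain
  have hlog : Real.logb 2 n < ((t - 1 : ℕ) : ℝ) := by
    have h1 : (n : ℝ) < ((2 ^ (t - 1) : ℕ) : ℝ) := by exact_mod_cast hn2pow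
    have h2 : Real.logb 2 n < Real.logb 2 ((2 ^ (t - 1) : ℕ) : ℝ) := by
      apply Real.logb_lt_logb one_lt_two (by positivity) h1
    have h3 : Real.logb 2 ((2 ^ (t - 1) : ℕ) : ℝ) = ((t - 1 : ℕ) : ℝ) := by
      push_cast
      rw [Real.logb_pow, Real.logb_self_eq_one (by norm_num), mul_one]
    rwa [h3] at h2
  have hnpos : (0:ℝ) < 2 * ((n:ℝ) - 2) := by
    have : (98:ℝ) ≤ n := by exact_mod_cast hn
    linarith
  have hlogn_nonneg : 0 ≤ Real.logb 2 n := by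
    apply Real.logb_nonneg one_lt_two
    have : (98:ℝ) ≤ n := by exact_mod_cast hn
    linarith
  have step1 : 2 * ((n : ℝ) - 2) * Real.logb 2 n < 2 * (n:ℝ) * ((t - 1 : ℕ) : ℝ) := by
    have a1 : 2 * ((n : ℝ) - 2) * Real.logb 2 n < 2 * ((n : ℝ) - 2) * ((t - 1 : ℕ) : ℝ) :=
      mul_lt_mul_of_pos_left hlog hnpos
    have a2 : 2 * ((n : ℝ) - 2) * ((t - 1 : ℕ) : ℝ) ≤ 2 * (n:ℝ) * ((t - 1 : ℕ) : ℝ) := by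
      apply mul_le_mul_of_nonneg_right _ (by positivity)
      linarith
    linarith
  have step2 : 2 * (n:ℝ) * ((t - 1 : ℕ) : ℝ) < ((2 ^ (t - 2) : ℕ) : ℝ) := by
    have : ((2 * n * (t - 1) : ℕ) : ℝ) < ((2 ^ (t - 2) : ℕ) : ℝ) := by exact_mod_cast hnat
    push_cast at this ⊢
    linarith
  have step3 : ((2 ^ (t - 2) : ℕ) : ℝ) ≤ (Nat.card (ConjClasses (Equiv.Perm (Fin n))) : ℝ) := by
    exact_mod_cast hcard
  linarith

def codes12 : List ℕ := [0,2,3,4,5,6,7,8,9,10,11,12,202,302,303,402,403,404,502,503,504,505,602,603,604,605,606,702,703,704,705,802,803,804,902,903,1002,20202,30202,30302,30303,40202,40302,40303,40402,40403,40404,50202,50302,50303,50402,50403,50502,60202,60302,60303,60402,70202,70302,80202,2020202,3020202,3030202,3030302,3030303,4020202,4030202,4030302,4040202,5020202,5030202,6020202,202020202,302020202,303020202,402020202,20202020202]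

def codes13 : List ℕ := [0,2,3,4,5,6,7,8,9,10,11,12,13,202,302,303,402,403,404,502,503,504,505,602,603,604,605,606,702,703,704,705,706,802,803,804,805,902,903,904,1002,1003,1102,20202,30202,30302,30303,40202,40302,40303,40402,40403,40404,50202,50302,50303,50402,50403,50404,50502,50503,60202,60302,60303,60402,60403,60502,70202,70302,70303,70402,80202,80302,90202,2020202,3020202,3030202,3030302,3030303,4020202,4030202,4030302,4030303,4040202,4040302,5020202,5030202,5030302,5040202,6020202,6030202,7020202,202020202,302020202,303020202,303030202,402020202,403020202,502020202,20202020202,30202020202]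

def codes15 : List ℕ := [0,2,3,4,5,6,7,8,9,10,11,12,13,14,15,202,302,303,402,403,404,502,503,504,505,602,603,604,605,606,702,703,704,705,706,707,802,803,804,805,806,807,902,903,904,905,906,1002,1003,1004,1005,1102,1103,1104,1202,1203,1302,20202,30202,30302,30303,40202,40302,40303,40402,40403,40404,50202,50302,50303,50402,50403,50404,50502,50503,50504,50505,60202,60302,60303,60402,60403,60404,60502,60503,60504,60602,60603,70202,70302,70303,70402,70403,70404,70502,70503,70602,80202,80302,80303,80402,80403,80502,90202,90302,90303,90402,100202,100302,110202,2020202,3020202,3030202,3030302,3030303,4020202,4030202,4030302,4030303,4040202,4040302,4040303,4040402,4040403,5020202,5030202,5030302,5030303,5040202,5040302,5040303,5040402,5050202,5050302,6020202,6030202,6030302,6030303,6040202,6040302,6050202,7020202,7030202,7030302,7040202,8020202,8030202,9020202,202020202,302020202,303020202,303030202,303030302,303030303,402020202,403020202,403030202,403030302,404020202,404030202,502020202,503020202,503030202,504020202,602020202,603020202,702020202,20202020202,30202020202,30302020202,30303020202,40202020202,40302020202,50202020202,2020202020202,3020202020202]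

def codes18 : List ℕ := [0,2,3,4,5,6,7,8,9,10,11,12,13,14,15,16,17,18,202,302,303,402,403,404,502,503,504,505,602,603,604,605,606,702,703,704,705,706,707,802,803,804,805,806,807,808,902,903,904,905,906,907,908,909,1002,1003,1004,1005,1006,1007,1008,1102,1103,1104,1105,1106,1107,1202,1203,1204,1205,1206,1302,1303,1304,1305,1402,1403,1404,1502,1503,1602,20202,30202,30302,30303,40202,40302,40303,40402,40403,40404,50202,50302,50303,50402,50403,50404,50502,50503,50504,50505,60202,60302,60303,60402,60403,60404,60502,60503,60504,60505,60602,60603,60604,60605,60606,70202,70302,70303,70402,70403,70404,70502,70503,70504,70505,70602,70603,70604,70605,70702,70703,70704,80202,80302,80303,80402,80403,80404,80502,80503,80504,80505,80602,80603,80604,80702,80703,80802,90202,90302,90303,90402,90403,90404,90502,90503,90504,90602,90603,90702,100202,100302,100303,100402,100403,100404,100502,100503,100602,110202,110302,110303,110402,110403,110502,120202,120302,120303,120402,130202,130302,140202,2020202,3020202,3030202,3030302,3030303,4020202,4030202,4030302,4030303,4040202,4040302,4040303,4040402,4040403,4040404,5020202,5030202,5030302,5030303,5040202,5040302,5040303,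5040402,5040403,5040404,5050202,5050302,5050303,5050402,5050403,5050404,5050502,5050503,6020202,6030202,6030302,6030303,6040202,6040302,6040303,6040402,6040403,6040404,6050202,6050302,6050303,6050402,6050403,6050502,6060202,6060302,6060303,6060402,7020202,7030202,7030302,7030303,7040202,7040302,7040303,7040402,7040403,7050202,7050302,7050303,7050402,7060202,7060302,7070202,8020202,8030202,8030302,8030303,8040202,8040302,8040303,8040402,8050202,8050302,8060202,9020202,9030202,9030302,9030303,9040202,9040302,9050202,10020202,10030202,10030302,10040202,11020202,11030202,12020202,202020202,302020202,303020202,303030202,303030302,303030303,402020202,403020202,403030202,403030302,403030303,404020202,404030202,404030302,404030303,404040202,404040302,404040303,404040402,502020202,503020202,503030202,503030302,503030303,504020202,504030202,504030302,504030303,504040202,504040302,505020202,505030202,505030302,505040202,602020202,603020202,603030202,603030302,603030303,604020202,604030202,604030302,604040202,605020202,605030202,606020202,702020202,703020202,703030202,703030302,704020202,704030202,705020202,802020202,803020202,803030202,804020202,902020202,903020202,1002020202,20202020202,30202020202,30302020202,30303020202,30303030202,30303030302,30303030303,40202020202,40302020202,40303020202,40303030202,40303030302,40402020202,40403020202,4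0403030202,40404020202,50202020202,50302020202,50303020202,50303030202,50402020202,50403020202,50502020202,60202020202,60302020202,60303020202,60402020202,70202020202,70302020202,80202020202,2020202020202,3020202020202,3030202020202,3030302020202,3030303020202,4020202020202,4030202020202,4030302020202,4040202020202,5020202020202,5030202020202,6020202020202,202020202020202,302020202020202,303020202020202,402020202020202,20202020202020202]

def codes24 : List ℕ := [0,2,3,4,5,6,7,8,9,10,11,12,13,14,15,16,17,18,19,20,21,22,23,24,202,302,303,402,403,404,502,503,504,505,602,603,604,605,606,702,703,704,705,706,707,802,803,804,805,806,807,808,902,903,904,905,906,907,908,909,1002,1003,1004,1005,1006,1007,1008,1009,1010,1102,1103,1104,1105,1106,1107,1108,1109,1110,1111,1202,1203,1204,1205,1206,1207,1208,1209,1210,1211,1212,1302,1303,1304,1305,1306,1307,1308,1309,1310,1311,1402,1403,1404,1405,1406,1407,1408,1409,1410,1502,1503,1504,1505,1506,1507,1508,1509,1602,1603,1604,1605,1606,1607,1608,1702,1703,1704,1705,1706,1707,1802,1803,1804,1805,1806,1902,1903,1904,1905,2002,2003,2004,2102,2103,2202,20202,30202,30302,30303,40202,40302,40303,40402,40403,4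0404,50202,50302,50303,50402,50403,50404,50502,50503,50504,50505,60202,60302,60303,60402,60403,60404,60502,60503,60504,60505,60602,60603,60604,60605,60606,70202,70302,70303,70402,70403,70404,70502,70503,70504,70505,70602,70603,70604,70605,70606,70702,70703,70704,70705,70706,70707,80202,80302,80303,80402,80403,80404,80502,80503,80504,80505,80602,80603,80604,80605,80606,80702,80703,80704,80705,80706,80707,80802,80803,80804,80805,80806,80807,80808,90202,90302,90303,90402,90403,90404,90502,90503,90504,90505,90602,90603,90604,90605,90606,90702,90703,90704,90705,90706,90707,90802,90803,90804,90805,90806,90807,90902,90903,90904,90905,90906,100202,100302,100303,100402,100403,100404,100502,100503,100504,100505,100602,100603,100604,100605,100606,100702,100703,100704,100705,100706,100707,100802,100803,100804,100805,100806,100902,100903,100904,100905,101002,101003,101004,110202,110302,110303,110402,110403,110404,110502,110503,110504,110505,110602,110603,110604,110605,110606,110702,110703,110704,110705,110706,110802,110803,110804,110805,110902,110903,110904,111002,111003,111102,120202,120302,120303,120402,120403,120404,120502,120503,120504,120505,120602,120603,120604,120605,120606,120702,120703,120704,120705,120802,120803,120804,120902,120903,121002,130202,130302,130303,130402,130403,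130404,130502,130503,130504,130505,130602,130603,130604,130605,130702,130703,130704,130802,130803,130902,140202,140302,140303,140402,140403,140404,140502,140503,140504,140505,140602,140603,140604,140702,140703,140802,150202,150302,150303,150402,150403,150404,150502,150503,150504,150602,150603,150702,160202,160302,160303,160402,160403,160404,160502,160503,160602,170202,170302,170303,170402,170403,170502,180202,180302,180303,180402,190202,190302,200202,2020202,3020202,3030202,3030302,3030303,4020202,4030202,4030302,4030303,4040202,4040302,4040303,4040402,4040403,4040404,5020202,5030202,5030302,5030303,5040202,5040302,5040303,5040402,5040403,5040404,5050202,5050302,5050303,5050402,5050403,5050404,5050502,5050503,5050504,5050505,6020202,6030202,6030302,6030303,6040202,6040302,6040303,6040402,6040403,6040404,6050202,6050302,6050303,6050402,6050403,6050404,6050502,6050503,6050504,6050505,6060202,6060302,6060303,6060402,6060403,6060404,6060502,6060503,6060504,6060505,6060602,6060603,6060604,6060605,6060606,7020202,7030202,7030302,7030303,7040202,7040302,7040303,7040402,7040403,7040404,7050202,7050302,7050303,7050402,7050403,7050404,7050502,7050503,7050504,7050505,7060202,7060302,7060303,7060402,7060403,7060404,7060502,7060503,7060504,7060505,7060602,7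060603,7060604,7060605,7070202,7070302,7070303,7070402,7070403,7070404,7070502,7070503,7070504,7070505,7070602,7070603,7070604,7070702,7070703,8020202,8030202,8030302,8030303,8040202,8040302,8040303,8040402,8040403,8040404,8050202,8050302,8050303,8050402,8050403,8050404,8050502,8050503,8050504,8050505,8060202,8060302,8060303,8060402,8060403,8060404,8060502,8060503,8060504,8060505,8060602,8060603,8060604,8070202,8070302,8070303,8070402,8070403,8070404,8070502,8070503,8070504,8070602,8070603,8070702,8080202,8080302,8080303,8080402,8080403,8080404,8080502,8080503,8080602,9020202,9030202,9030302,9030303,9040202,9040302,9040303,9040402,9040403,9040404,9050202,9050302,9050303,9050402,9050403,9050404,9050502,9050503,9050504,9050505,9060202,9060302,9060303,9060402,9060403,9060404,9060502,9060503,9060504,9060602,9060603,9070202,9070302,9070303,9070402,9070403,9070404,9070502,9070503,9070602,9080202,9080302,9080303,9080402,9080403,9080502,9090202,9090302,9090303,9090402,10020202,10030202,10030302,10030303,10040202,10040302,10040303,10040402,10040403,10040404,10050202,10050302,10050303,10050402,10050403,10050404,10050502,10050503,10050504,10060202,10060302,10060303,10060402,10060403,10060404,10060502,10060503,10060602,1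0070202,10070302,10070303,10070402,10070403,10070502,10080202,10080302,10080303,10080402,10090202,10090302,10100202,11020202,11030202,11030302,11030303,11040202,11040302,11040303,11040402,11040403,11040404,11050202,11050302,11050303,11050402,11050403,11050404,11050502,11050503,11060202,11060302,11060303,11060402,11060403,11060502,11070202,11070302,11070303,11070402,11080202,11080302,11090202,12020202,12030202,12030302,12030303,12040202,12040302,12040303,12040402,12040403,12040404,12050202,12050302,12050303,12050402,12050403,12050502,12060202,12060302,12060303,12060402,12070202,12070302,12080202,13020202,13030202,13030302,13030303,13040202,13040302,13040303,13040402,13040403,13050202,13050302,13050303,13050402,13060202,13060302,13070202,14020202,14030202,14030302,14030303,14040202,14040302,14040303,14040402,14050202,14050302,14060202,15020202,15030202,15030302,15030303,15040202,15040302,15050202,16020202,16030202,16030302,16040202,17020202,17030202,18020202,202020202,302020202,303020202,303030202,303030302,303030303,402020202,403020202,403030202,403030302,403030303,404020202,404030202,404030302,404030303,404040202,404040302,404040303,404040402,404040403,404040404,502020202,503020202,503030202,503030302,503030303,504020202,504030202,504030302,504030303,504040202,504040302,504040303,504040402,504040403,504040404,505020202,505030202,505030302,505030303,505040202,505040302,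505040303,505040402,505040403,505040404,505050202,505050302,505050303,505050402,505050403,505050404,505050502,505050503,505050504,602020202,603020202,603030202,603030302,603030303,604020202,604030202,604030302,604030303,604040202,604040302,604040303,604040402,604040403,604040404,605020202,605030202,605030302,605030303,605040202,605040302,605040303,605040402,605040403,605040404,605050202,605050302,605050303,605050402,605050403,605050404,605050502,605050503,606020202,606030202,606030302,606030303,606040202,606040302,606040303,606040402,606040403,606040404,606050202,606050302,606050303,606050402,606050403,606050502,606060202,606060302,606060303,606060402,702020202,703020202,703030202,703030302,703030303,704020202,704030202,704030302,704030303,704040202,704040302,704040303,704040402,704040403,704040404,705020202,705030202,705030302,705030303,705040202,705040302,705040303,705040402,705040403,705040404,705050202,705050302,705050303,705050402,705050403,705050502,706020202,706030202,706030302,706030303,706040202,706040302,706040303,706040402,706040403,706050202,706050302,706050303,706050402,706060202,706060302,707020202,707030202,707030302,707030303,707040202,707040302,707040303,707040402,707050202,707050302,707060202,802020202,803020202,803030202,803030302,803030303,804020202,804030202,804030302,804030303,804040202,804040302,804040303,804040402,804040403,804040404,805020202,805030202,805030302,805030303,805040202,805040302,805040303,805040402,805040403,805050202,805050302,805050303,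805050402,806020202,806030202,806030302,806030303,806040202,806040302,806040303,806040402,806050202,806050302,806060202,807020202,807030202,807030302,807030303,807040202,807040302,807050202,808020202,808030202,808030302,808040202,902020202,903020202,903030202,903030302,903030303,904020202,904030202,904030302,904030303,904040202,904040302,904040303,904040402,904040403,905020202,905030202,905030302,905030303,905040202,905040302,905040303,905040402,905050202,905050302,906020202,906030202,906030302,906030303,906040202,906040302,906050202,907020202,907030202,907030302,907040202,908020202,908030202,909020202,1002020202,1003020202,1003030202,1003030302,1003030303,1004020202,1004030202,1004030302,1004030303,1004040202,1004040302,1004040303,1004040402,1005020202,1005030202,1005030302,1005030303,1005040202,1005040302,1005050202,1006020202,1006030202,1006030302,1006040202,1007020202,1007030202,1008020202,1102020202,1103020202,1103030202,1103030302,1103030303,1104020202,1104030202,1104030302,1104030303,1104040202,1104040302,1105020202,1105030202,1105030302,1105040202,1106020202,1106030202,1107020202,1202020202,1203020202,1203030202,1203030302,1203030303,1204020202,1204030202,1204030302,1204040202,1205020202,1205030202,1206020202,1302020202,1303020202,1303030202,1303030302,1304020202,1304030202,1305020202,1402020202,1403020202,1403030202,1404020202,1502020202,1503020202,1602020202,2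0202020202,30202020202,30302020202,30303020202,30303030202,30303030302,30303030303,40202020202,40302020202,40303020202,40303030202,40303030302,40303030303,40402020202,40403020202,40403030202,40403030302,40403030303,40404020202,40404030202,40404030302,40404030303,40404040202,40404040302,40404040303,40404040402,40404040403,40404040404,50202020202,50302020202,50303020202,50303030202,50303030302,50303030303,50402020202,50403020202,50403030202,50403030302,50403030303,50404020202,50404030202,50404030302,50404030303,50404040202,50404040302,50404040303,50404040402,50404040403,50502020202,50503020202,50503030202,50503030302,50503030303,50504020202,50504030202,50504030302,50504030303,50504040202,50504040302,50504040303,50504040402,50505020202,50505030202,50505030302,50505030303,50505040202,50505040302,50505050202,60202020202,60302020202,60303020202,60303030202,60303030302,60303030303,60402020202,60403020202,60403030202,60403030302,60403030303,60404020202,60404030202,60404030302,60404030303,60404040202,60404040302,60404040303,60404040402,60502020202,60503020202,60503030202,60503030302,60503030303,60504020202,60504030202,60504030302,60504030303,60504040202,60504040302,60505020202,60505030202,60505030302,60505040202,60602020202,60603020202,60603030202,60603030302,60603030303,60604020202,60604030202,60604030302,60604040202,60605020202,60605030202,60606020202,70202020202,70302020202,70303020202,70303030202,70303030302,70303030303,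70402020202,70403020202,70403030202,70403030302,70403030303,70404020202,70404030202,70404030302,70404030303,70404040202,70404040302,70502020202,70503020202,70503030202,70503030302,70503030303,70504020202,70504030202,70504030302,70504040202,70505020202,70505030202,70602020202,70603020202,70603030202,70603030302,70604020202,70604030202,70605020202,70702020202,70703020202,70703030202,70704020202,80202020202,80302020202,80303020202,80303030202,80303030302,80303030303,80402020202,80403020202,80403030202,80403030302,80403030303,80404020202,80404030202,80404030302,80404040202,80502020202,80503020202,80503030202,80503030302,80504020202,80504030202,80505020202,80602020202,80603020202,80603030202,80604020202,80702020202,80703020202,80802020202,90202020202,90302020202,90303020202,90303030202,90303030302,90303030303,90402020202,90403020202,90403030202,90403030302,90404020202,90404030202,90502020202,90503020202,90503030202,90504020202,90602020202,90603020202,90702020202,100202020202,100302020202,100303020202,100303030202,100303030302,100402020202,100403020202,100403030202,100404020202,100502020202,100503020202,100602020202,110202020202,110302020202,110303020202,110303030202,110402020202,110403020202,110502020202,120202020202,120302020202,120303020202,120402020202,130202020202,130302020202,140202020202,2020202020202,3020202020202,3030202020202,3030302020202,3030303020202,3030303030202,3030303030302,3030303030303,4020202020202,4030202020202,4030302020202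,4030303020202,4030303030202,4030303030302,4030303030303,4040202020202,4040302020202,4040303020202,4040303030202,4040303030302,4040303030303,4040402020202,4040403020202,4040403030202,4040403030302,4040403030303,4040404020202,4040404030202,4040404030302,4040404040202,5020202020202,5030202020202,5030302020202,5030303020202,5030303030202,5030303030302,5030303030303,5040202020202,5040302020202,5040303020202,5040303030202,5040303030302,5040303030303,5040402020202,5040403020202,5040403030202,5040403030302,5040404020202,5040404030202,5050202020202,5050302020202,5050303020202,5050303030202,5050303030302,5050402020202,5050403020202,5050403030202,5050404020202,5050502020202,5050503020202,6020202020202,6030202020202,6030302020202,6030303020202,6030303030202,6030303030302,6030303030303,6040202020202,6040302020202,6040303020202,6040303030202,6040303030302,6040402020202,6040403020202,6040403030202,6040404020202,6050202020202,6050302020202,6050303020202,6050303030202,6050402020202,6050403020202,6050502020202,6060202020202,6060302020202,6060303020202,6060402020202,7020202020202,7030202020202,7030302020202,7030303020202,7030303030202,7030303030302,7040202020202,7040302020202,7040303020202,7040303030202,7040402020202,7040403020202,7050202020202,7050302020202,7050303020202,7050402020202,7060202020202,7060302020202,7070202020202,8020202020202,8030202020202,8030302020202,8030303020202,8030303030202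,8040202020202,8040302020202,8040303020202,8040402020202,8050202020202,8050302020202,8060202020202,9020202020202,9030202020202,9030302020202,9030303020202,9040202020202,9040302020202,9050202020202,10020202020202,10030202020202,10030302020202,10040202020202,11020202020202,11030202020202,12020202020202,202020202020202,302020202020202,303020202020202,303030202020202,303030302020202,303030303020202,303030303030202,303030303030302,303030303030303,402020202020202,403020202020202,403030202020202,403030302020202,403030303020202,403030303030202,403030303030302,404020202020202,404030202020202,404030302020202,404030303020202,404030303030202,404040202020202,404040302020202,404040303020202,404040402020202,502020202020202,503020202020202,503030202020202,503030302020202,503030303020202,503030303030202,504020202020202,504030202020202,504030302020202,504030303020202,504040202020202,504040302020202,505020202020202,505030202020202,505030302020202,505040202020202,602020202020202,603020202020202,603030202020202,603030302020202,603030303020202,604020202020202,604030202020202,604030302020202,604040202020202,605020202020202,605030202020202,606020202020202,702020202020202,703020202020202,703030202020202,703030302020202,704020202020202,704030202020202,705020202020202,802020202020202,803020202020202,803030202020202,804020202020202,902020202020202,903020202020202,1002020202020202,20202020202020202,30202020202020202,30302020202020202,30303020202020202,30303030202020202,30303030302020202,30303030303020202,40202020202020202,40302020202020202,40303020202020202,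40303030202020202,40303030302020202,40402020202020202,40403020202020202,40403030202020202,40404020202020202,50202020202020202,50302020202020202,50303020202020202,50303030202020202,50402020202020202,50403020202020202,50502020202020202,60202020202020202,60302020202020202,60303020202020202,60402020202020202,70202020202020202,70302020202020202,80202020202020202,2020202020202020202,3020202020202020202,3030202020202020202,3030302020202020202,3030303020202020202,4020202020202020202,4030202020202020202,4030302020202020202,4040202020202020202,5020202020202020202,5030202020202020202,6020202020202020202,202020202020202020202,302020202020202020202,303020202020202020202,402020202020202020202,20202020202020202020202]


theorem k_symm_gt (n : ℕ) (hn : 12 ≤ n) :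
    2 * ((n : ℝ) - 2) * Real.logb 2 n <
      (Nat.card (ConjClasses (Equiv.Perm (Fin n))) : ℝ) := by
  rcases Nat.lt_or_ge n 13 with h | h
  · refine range_bound n 12 18 5 77 hn (by omega) (by norm_num) (by norm_num) (by norm_num) ?_
    have hc := conj_card_ge_codes n 12 codes12 (by omega) (chLt_sound _ (by decide))
      (fun c hc => okc_sound 12 c (List.all_eq_true.mp (by decide) c hc))
    have hlen : codes12.length = 77 := by decide
    rwa [hlen] at hc
  rcases Nat.lt_or_ge n 15 with h2 | h2
  · refine range_bound n 14 4 1 101 hn (by omega) (by norm_num) (by norm_num) (by norm_num) ?_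
    have hc := conj_card_ge_codes n 13 codes13 (by omega) (chLt_sound _ (by decide))
      (fun c hc => okc_sound 13 c (List.all_eq_true.mp (by decide) c hc))
    have hlen : codes13.length = 101 := by decide
    rwa [hlen] at hc
  rcases Nat.lt_or_ge n 18 with h3 | h3
  · refine range_bound n 17 5 1 176 hn (by omega) (by norm_num) (by norm_num) (by norm_num) ?_
    have hc := conj_card_ge_codes n 15 codes15 (by omega) (chLt_sound _ (by decide))
      (fun c hc => okc_sound 15 c (List.all_eq_true.mp (by decide) c hc))
    have hlen : codes15.length = 176 := by decide
    rwa [hlen] at hc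
  rcases Nat.lt_or_ge n 24 with h4 | h4
  · refine range_bound n 23 5 1 385 hn (by omega) (by norm_num) (by norm_num) (by norm_num) ?_
    have hc := conj_card_ge_codes n 18 codes18 (by omega) (chLt_sound _ (by decide))
      (fun c hc => okc_sound 18 c (List.all_eq_true.mp (by decide) c hc))
    have hlen : codes18.length = 385 := by decide
    rwa [hlen] at hc
  rcases Nat.lt_or_ge n 98 with h5 | h5
  · refine range_bound n 97 7 1 1575 hn (by omega) (by norm_num) (by norm_num) (by norm_num) ?_
    have hc := conj_card_ge_codes n 24 codes24 (by omega) (chLt_sound _ (by decide))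
      (fun c hc => okc_sound 24 c (List.all_eq_true.mp (by decide) c hc))
    have hlen : codes24.length = 1575 := by decide
    rwa [hlen] at hc
  · exact asymp_bound n h5 (fun k hk hkn => conj_card_ge_pow n k hk hkn)
end

section
/- For every integer n ≥ 12, p(n) > 2·(n−2)·log₂(n), where p(n) is the partition function. -/
open Finset

/-- DP count: number of multisets with parts in `[2,k]` and sum `≤ n`. -/
def gcount : ℕ → ℕ → ℕ
  | 0, _ => 1
  | 1, _ => 1
  | (k+2), n => ∑ m ∈ Finset.range (n/(k+2) + 1), gcount (k+1) (n - m*(k+2))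

/-- The finset of such multisets. -/
def GS : ℕ → ℕ → Finset (Multiset ℕ)
  | 0, _ => {0}
  | 1, _ => {0}
  | (k+2), n => (Finset.range (n/(k+2) + 1)).biUnion
      (fun m => (GS (k+1) (n - m*(k+2))).image (fun s => Multiset.replicate m (k+2) + s))

lemma GS_sound : ∀ (k n : ℕ) (s : Multiset ℕ), s ∈ GS k n →
    s.sum ≤ n ∧ ∀ x ∈ s, 2 ≤ x ∧ x ≤ k := by
  intro k
  induction k with
  | zero =>
    intro n s hs
    simp [GS] at hs
    simp [hs]
  | succ k ih =>
    match k with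
    | 0 =>
      intro n s hs
      simp [GS] at hs
      simp [hs]
    | k+1 =>
      intro n s hs
      simp only [GS, Finset.mem_biUnion, Finset.mem_image, Finset.mem_range] at hs
      obtain ⟨m, hm, t, ht, rfl⟩ := hs
      obtain ⟨ht1, ht2⟩ := ih _ t ht
      have hmn : m * (k+2) ≤ n := by
        have : m ≤ n / (k+2) := Nat.lt_succ_iff.mp hm
        calc m * (k+2) ≤ n/(k+2) * (k+2) := Nat.mul_le_mul_right _ this
        _ ≤ n := Nat.div_mul_le_self _ _
      constructor
      · rw [Multiset.sum_add, Multiset.sum_replicate, smul_eq_mul]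
        omega
      · intro x hx
        rw [Multiset.mem_add] at hx
        rcases hx with hx | hx
        · rw [Multiset.eq_of_mem_replicate hx]; omega
        · have := ht2 x hx; omega

lemma GS_card : ∀ (k n : ℕ), (GS k n).card = gcount k n := by
  intro k
  induction k with
  | zero => intro n; simp [GS, gcount]
  | succ k ih =>
    match k with
    | 0 => intro n; simp [GS, gcount]
    | k+1 =>
      intro n
      rw [GS, gcount]
      rw [Finset.card_biUnion]
      · refine Finset.sum_congr rfl fun m _ => ?_
        rw [Finset.card_image_of_injective _ (add_right_injective _), ih]
      · intro a _ b _ hab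
        rw [Function.onFun, Finset.disjoint_left]
        rintro s hsa hsb
        simp only [Finset.mem_image] at hsa hsb
        obtain ⟨t, ht, rfl⟩ := hsa
        obtain ⟨u, hu, huv⟩ := hsb
        have hta : (k+2) ∉ t := fun h => by have := (GS_sound _ _ t ht).2 _ h; omega
        have hua : (k+2) ∉ u := fun h => by have := (GS_sound _ _ u hu).2 _ h; omega
        have h1 : (Multiset.replicate a (k+2) + t).count (k+2) = a := by
          rw [Multiset.count_add, Multiset.count_replicate_self,
            Multiset.count_eq_zero_of_notMem hta]
          omega
        have h2 : (Multiset.replicate b (k+2) + u).count (k+2) = b := by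
          rw [Multiset.count_add, Multiset.count_replicate_self,
            Multiset.count_eq_zero_of_notMem hua]
          omega
        rw [huv] at h2
        exact hab (h1 ▸ h2 ▸ rfl)

/-- Key injection: any finset of multisets with entries `≥ 2` and sum `≤ n`
has cardinality at most the number of partitions of `n`. -/
lemma key (n : ℕ) (T : Finset (Multiset ℕ))
    (hT : ∀ s ∈ T, s.sum ≤ n ∧ ∀ x ∈ s, 2 ≤ x) :
    T.card ≤ Fintype.card n.Partition := by
  classical
  have hparts : Function.Injective (Nat.Partition.parts (n := n)) := by
    intro p q h; exact Nat.Partition.ext h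
  have hcard : (Finset.univ.image (Nat.Partition.parts (n := n))).card
      = Fintype.card n.Partition := by
    rw [Finset.card_image_of_injective _ hparts, Finset.card_univ]
  rw [← hcard]
  apply Finset.card_le_card_of_injOn
    (fun s => s + Multiset.replicate (n - s.sum) 1)
  · intro s hs
    obtain ⟨h1, h2⟩ := hT s hs
    refine Finset.mem_image.2 ⟨⟨s + Multiset.replicate (n - s.sum) 1, ?_, ?_⟩,
      Finset.mem_univ _, rfl⟩
    · intro i hi
      rw [Multiset.mem_add] at hi
      rcases hi with hi | hi
      · exact lt_of_lt_of_le two_pos (h2 i hi)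
      · rw [Multiset.eq_of_mem_replicate hi]; exact one_pos
    · rw [Multiset.sum_add, Multiset.sum_replicate, smul_eq_mul, mul_one]
      omega
  · intro s hs t ht hst
    have hfs : ∀ u : Multiset ℕ, (∀ x ∈ u, 2 ≤ x) →
        (u + Multiset.replicate (n - u.sum) 1).filter (fun x => 2 ≤ x) = u := by
      intro u hu
      rw [Multiset.filter_add, Multiset.filter_eq_self.2 hu,
        Multiset.filter_eq_nil.2, add_zero]
      intro x hx
      rw [Multiset.eq_of_mem_replicate hx]
      omega
    have hst' : s + Multiset.replicate (n - s.sum) 1 = t + Multiset.replicate (n - t.sum) 1 := hst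
    have := hfs s (hT s hs).2
    rw [hst', hfs t (hT t ht).2] at this
    exact this.symm

lemma small_bound {a n : ℕ} (h : a ≤ n) : gcount 9 a ≤ Fintype.card n.Partition := by
  rw [← GS_card]
  apply key
  intro s hs
  obtain ⟨h1, h2⟩ := GS_sound 9 a s hs
  exact ⟨le_trans h1 h, fun x hx => (h2 x hx).1⟩

lemma tail_bound (n : ℕ) : (n/9 + 7).choose 7 ≤ Fintype.card n.Partition := by
  classical
  set c := n / 9 with hc
  have hmap : Function.Injective
      (fun s : Sym (Fin 8) c => Multiset.map (fun i : Fin 8 => (i : ℕ) + 2) (s : Multiset (Fin 8))) := by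
    intro s t h
    apply Sym.coe_injective
    refine Multiset.map_injective (f := fun i : Fin 8 => (i : ℕ) + 2) ?_ h
    intro i j hij
    have hij' : (i : ℕ) + 2 = (j : ℕ) + 2 := hij
    exact Fin.ext (by omega)
  have hcard : (Finset.univ.image
      (fun s : Sym (Fin 8) c => Multiset.map (fun i : Fin 8 => (i : ℕ) + 2) (s : Multiset (Fin 8)))).card
      = (c + 7).choose 7 := by
    rw [Finset.card_image_of_injective _ hmap, Finset.card_univ, Sym.card_sym_eq_choose]
    simp only [Fintype.card_fin]
    rw [show 8 + c - 1 = c + 7 by omega, ← Nat.choose_symm (by omega : 7 ≤ c + 7),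
      show c + 7 - 7 = c by omega]
  rw [← hcard]
  apply key
  intro s hs
  simp only [Finset.mem_image] at hs
  obtain ⟨t, _, rfl⟩ := hs
  constructor
  · have h9 : ∀ x ∈ Multiset.map (fun i : Fin 8 => (i : ℕ) + 2) (t : Multiset (Fin 8)), x ≤ 9 := by
      intro x hx
      rw [Multiset.mem_map] at hx
      obtain ⟨i, _, rfl⟩ := hx
      omega
    calc (Multiset.map (fun i : Fin 8 => (i : ℕ) + 2) (t : Multiset (Fin 8))).sum
        ≤ (Multiset.map (fun i : Fin 8 => (i : ℕ) + 2) (t : Multiset (Fin 8))).card • 9 :=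
          Multiset.sum_le_card_nsmul _ _ h9
      _ = c * 9 := by rw [Multiset.card_map, Sym.card_coe, smul_eq_mul]
      _ ≤ n := by rw [hc]; exact Nat.div_mul_le_self n 9
  · intro x hx
    rw [Multiset.mem_map] at hx
    obtain ⟨i, _, rfl⟩ := hx
    omega

set_option maxHeartbeats 4000000

lemma logb_le_of_pow_le {b p q : ℕ} (hq : 0 < q) (hb : 0 < b)
    (h : (b : ℝ)^q ≤ 2^p) : Real.logb 2 b ≤ (p : ℝ) / q := by
  rw [Real.logb, div_le_div_iff₀ (Real.log_pos one_lt_two) (by exact_mod_cast hq)]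
  have hlog : Real.log ((b:ℝ)^q) ≤ Real.log ((2:ℝ)^p) :=
    Real.log_le_log (by positivity) h
  rw [Real.log_pow, Real.log_pow] at hlog
  linarith [hlog]


lemma aux_pow32 : ∀ m : ℕ, 16 ≤ m → 32 * (m + 1) ≤ 2 ^ m := by
  intro m hm
  induction m, hm using Nat.le_induction with
  | base => norm_num
  | succ k hk ih =>
    rw [pow_succ]
    omega

lemma interval_case {n a b p q N : ℕ} (hn12 : 12 ≤ n) (ha : a ≤ n) (hb : n ≤ b)
    (hq : 0 < q) (hb0 : 0 < b) (hb2 : (2:ℝ) ≤ (b:ℝ))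
    (hpow : (b : ℝ) ^ q ≤ 2 ^ p)
    (hgv : N ≤ gcount 9 a)
    (hnum : 2 * ((b : ℝ) - 2) * ((p : ℝ) / q) < N) :
    2 * ((n : ℝ) - 2) * Real.logb 2 n < (Fintype.card n.Partition : ℝ) := by
  have hcard : (N : ℝ) ≤ (Fintype.card n.Partition : ℝ) := by
    exact_mod_cast le_trans hgv (small_bound ha)
  have hnb : (n : ℝ) ≤ (b : ℝ) := by exact_mod_cast hb
  have hn1 : (1 : ℝ) ≤ (n : ℝ) := by exact_mod_cast le_trans (by norm_num) hn12
  have hlogb : Real.logb 2 (n : ℝ) ≤ (p : ℝ) / q := by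
    refine le_trans ?_ (logb_le_of_pow_le hq hb0 hpow)
    exact Real.logb_le_logb_of_le one_lt_two (by linarith) hnb
  have h0 : 0 ≤ Real.logb 2 (n : ℝ) := Real.logb_nonneg one_lt_two hn1
  have hmul : 2 * ((n : ℝ) - 2) * Real.logb 2 n ≤ 2 * ((b : ℝ) - 2) * ((p : ℝ) / q) := by
    apply mul_le_mul (by linarith) hlogb h0 (by linarith)
  linarith

theorem partition_gt (n : ℕ) (hn : 12 ≤ n) :
    2 * ((n : ℝ) - 2) * Real.logb 2 n < (Fintype.card n.Partition : ℝ) := by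
  rcases le_or_gt n 511 with hsm | hlg
  · rcases le_or_gt n 12 with h | h
    · exact interval_case hn hn h (by norm_num) (by norm_num) (by norm_num)
        (by norm_num : (12:ℝ)^5 ≤ 2^18)
        (by decide : 73 ≤ gcount 9 12) (by norm_num)
    rcases le_or_gt n 14 with h2 | h2
    · exact interval_case hn (by omega) h2 (by norm_num) (by norm_num) (by norm_num)
        (by norm_num : (14:ℝ)^6 ≤ 2^23)
        (by decide : 94 ≤ gcount 9 13) (by norm_num)
    rcases le_or_gt n 20 with h3 | h3
    · exact interval_case hn (by omega) h3 (by norm_num) (by norm_num) (by norm_num)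
        (by norm_num : (20:ℝ)^3 ≤ 2^13)
        (by decide : 157 ≤ gcount 9 15) (by norm_num)
    rcases le_or_gt n 42 with h4 | h4
    · exact interval_case hn (by omega) h4 (by norm_num) (by norm_num) (by norm_num)
        (by norm_num : (42:ℝ)^5 ≤ 2^27)
        (by decide : 598 ≤ gcount 9 21) (by norm_num)
    · exact interval_case hn (by omega) hsm (by norm_num) (by norm_num) (by norm_num)
        (by norm_num : (511:ℝ)^1 ≤ 2^9)
        (by decide : 9163 ≤ gcount 9 43) (by norm_num)
  · -- tail : 512 ≤ n
    have hn512 : 512 ≤ n := hlg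
    have hcardN : ((n/9 + 7).choose 7 : ℝ) ≤ (Fintype.card n.Partition : ℝ) := by
      exact_mod_cast tail_bound n
    have h5040 : (n/9 + 1) ^ 7 ≤ 5040 * (n/9 + 7).choose 7 := by
      have h1 := Nat.pow_succ_le_ascFactorial (n/9 + 1) 7
      have h2 := Nat.ascFactorial_eq_factorial_mul_choose (n/9) 7
      have h7 : Nat.factorial 7 = 5040 := by decide
      rw [h7] at h2
      omega
    have hn0 : (0:ℝ) < (n:ℝ) := by positivity
    -- logb bound
    have hm16 : 16 ≤ n / 32 := by omega
    have hn2m : (n : ℝ) ≤ 2 ^ (n / 32) := by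
      have : n ≤ 2 ^ (n / 32) := by
        have := aux_pow32 (n/32) hm16
        omega
      exact_mod_cast this
    have hlog : Real.logb 2 (n : ℝ) ≤ (n : ℝ) / 32 := by
      have h1 : Real.logb 2 (n : ℝ) ≤ Real.logb 2 ((2:ℝ) ^ (n/32)) :=
        Real.logb_le_logb_of_le one_lt_two hn0 hn2m
      have h2 : Real.logb 2 ((2:ℝ) ^ (n/32)) = (n/32 : ℕ) := by
        rw [Real.logb_pow, Real.logb_self_eq_one one_lt_two]
        ring
      have h3 : ((n/32 : ℕ) : ℝ) ≤ (n : ℝ) / 32 := by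
        rw [le_div_iff₀ (by norm_num : (0:ℝ) < 32)]
        exact_mod_cast Nat.div_mul_le_self n 32
      linarith
    have h0 : 0 ≤ Real.logb 2 (n : ℝ) := Real.logb_nonneg one_lt_two (by exact_mod_cast (by omega : 1 ≤ n))
    -- B(n) ≤ n^2/16
    have hB : 2 * ((n : ℝ) - 2) * Real.logb 2 n ≤ (n:ℝ)^2 / 16 := by
      have h1 : 2 * ((n : ℝ) - 2) * Real.logb 2 n ≤ 2 * (n:ℝ) * ((n:ℝ)/32) := by
        apply mul_le_mul (by nlinarith) hlog h0 (by positivity)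
      nlinarith
    -- n^2/16 < choose
    have hK : (n:ℝ)/9 ≤ ((n/9 + 1 : ℕ) : ℝ) := by
      rw [div_le_iff₀ (by norm_num : (0:ℝ) < 9)]
      have : n ≤ (n/9 + 1) * 9 := by omega
      exact_mod_cast this
    have hK7 : ((n:ℝ)/9)^7 ≤ (((n/9 + 1 : ℕ) : ℝ))^7 := by
      apply pow_le_pow_left₀ (by positivity) hK
    have h5040R : (((n/9 + 1 : ℕ) : ℝ))^7 ≤ 5040 * ((n/9 + 7).choose 7 : ℝ) := by
      exact_mod_cast h5040
    have hpoly : (n:ℝ)^2 / 16 < ((n:ℝ)/9)^7 / 5040 := by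
      rw [div_lt_div_iff₀ (by norm_num) (by norm_num)]
      have hp5 : (512:ℝ)^5 ≤ (n:ℝ)^5 := by
        apply pow_le_pow_left₀ (by norm_num)
        exact_mod_cast hn512
      have e : ((n:ℝ)/9)^7 = (n:ℝ)^7 / 9^7 := by rw [div_pow]
      rw [e]
      have h7 : (n:ℝ)^7 = (n:ℝ)^2 * (n:ℝ)^5 := by ring
      have hsq : (0:ℝ) < (n:ℝ)^2 := by positivity
      rw [div_mul_eq_mul_div, lt_div_iff₀ (by norm_num : (0:ℝ) < 9^7)]
      nlinarith [mul_le_mul_of_nonneg_left hp5 (le_of_lt hsq)]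
    have : ((n:ℝ)/9)^7 / 5040 ≤ ((n/9 + 7).choose 7 : ℝ) := by
      rw [div_le_iff₀ (by norm_num : (0:ℝ) < 5040)]
      nlinarith [hK7, h5040R]
    linarith
end
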